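/- Let H be a Hilbert space, x ∈ H, and for each nonempty closed convex set K ⊆ H let P_K x denote the metric projection of x onto K. If (K_n) and K are nonempty closed convex subsets of H with Hausdorff distance d_H(K_n, K) → 0, then ‖P_{K_n} x − P_K x‖ → 0. -/

import Mathlib

open Filter Topology

open RealInnerProductSpace in
lemma metric_projection_var_ineq {H : Type*} [NormedAddCommGroup H] [InnerProductSpace ℝ H]
    {K : Set H} (hconv : Convex ℝ K) {x v : H} (hv : v ∈ K)
    (hmin : ∀ y ∈ K, ‖x - v‖ ≤ ‖x - y‖) :
    ∀ w ∈ K, ⟪x - v, w - v⟫ ≤ 0 := by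
  refine (norm_eq_iInf_iff_real_inner_le_zero hconv hv).1 ?_
  haveI : Nonempty K := ⟨⟨v, hv⟩⟩
  refine le_antisymm (le_ciInf fun w => hmin w w.2) ?_
  have hbdd : BddBelow (Set.range fun w : K => ‖x - (w : H)‖) :=
    ⟨0, fun b hb => by obtain ⟨w, rfl⟩ := hb; exact norm_nonneg _⟩
  exact ciInf_le hbdd ⟨v, hv⟩

/-- continuity of the metric projection onto closed convex sets of a Hilbert
space with respect to Hausdorff convergence of the sets: if `p n` is the metric projection
of `x` onto the nonempty closed convex set `K n`, `p` the metric projection of `x` onto the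
nonempty closed convex set `K`, and `d_H(K n, K) → 0`, then `p n → p`. -/
theorem metric_projection_continuous_in_set
    {H : Type*} [NormedAddCommGroup H] [InnerProductSpace ℝ H] [CompleteSpace H]
    (x : H) (K : ℕ → Set H) (Klim : Set H)
    (hK_ne : ∀ n, (K n).Nonempty) (hK_closed : ∀ n, IsClosed (K n))
    (hK_convex : ∀ n, Convex ℝ (K n))
    (hKlim_ne : Klim.Nonempty) (hKlim_closed : IsClosed Klim) (hKlim_convex : Convex ℝ Klim)
    (p : ℕ → H) (hp_mem : ∀ n, p n ∈ K n)
    (hp_min : ∀ n, ∀ y ∈ K n, ‖x - p n‖ ≤ ‖x - y‖)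
    (q : H) (hq_mem : q ∈ Klim) (hq_min : ∀ y ∈ Klim, ‖x - q‖ ≤ ‖x - y‖)
    (hconv : Tendsto (fun n => EMetric.hausdorffEdist (K n) Klim) atTop (𝓝 0)) :
    Tendsto p atTop (𝓝 q) := by
  rw [Metric.tendsto_atTop]
  intro ε hε
  set M : ℝ := ‖x - q‖ with hM
  have hM0 : 0 ≤ M := norm_nonneg _
  set δ : ℝ := min 1 (ε ^ 2 / (2 * M + 2)) with hδdef
  have hδ0 : 0 < δ := lt_min one_pos (by positivity)
  have hδ1 : δ ≤ 1 := min_le_left _ _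
  have hev : ∀ᶠ n in atTop,
      EMetric.hausdorffEdist (K n) Klim < ENNReal.ofReal δ :=
    hconv.eventually (Iio_mem_nhds (by simp [hδ0]))
  obtain ⟨N, hN⟩ := Filter.eventually_atTop.1 hev
  refine ⟨N, fun n hn => ?_⟩
  have hD := hN n hn
  -- find y ∈ K n close to q
  obtain ⟨y, hyK, hy⟩ := EMetric.exists_edist_lt_of_hausdorffEdist_lt hq_mem
    (by rwa [EMetric.hausdorffEdist_comm])
  obtain ⟨z, hzK, hz⟩ := EMetric.exists_edist_lt_of_hausdorffEdist_lt (hp_mem n) hD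
  rw [edist_lt_ofReal] at hy hz
  set a : H := p n with ha
  have hqy : ‖y - q‖ < δ := by rw [← dist_eq_norm, dist_comm]; exact hy
  have haz : ‖a - z‖ < δ := by rw [← dist_eq_norm]; exact hz
  have hxq : ‖x - q‖ = M := rfl
  have hxa : ‖x - a‖ ≤ M + δ := by
    calc ‖x - a‖ ≤ ‖x - y‖ := hp_min n y hyK
      _ ≤ ‖x - q‖ + ‖q - y‖ := norm_sub_le_norm_sub_add_norm_sub _ _ _
      _ ≤ M + δ := by
          rw [hxq]
          have : ‖q - y‖ < δ := by rwa [norm_sub_rev]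
          linarith
  have hvar1 : inner ℝ (x - a) (y - a) ≤ (0 : ℝ) :=
    metric_projection_var_ineq (hK_convex n) (hp_mem n) (hp_min n) y hyK
  have hvar2 : inner ℝ (x - q) (z - q) ≤ (0 : ℝ) :=
    metric_projection_var_ineq hKlim_convex hq_mem hq_min z hzK
  have key : ‖a - q‖ ^ 2 ≤ δ * (2 * M + δ) := by
    have e1 : ‖a - q‖ ^ 2 = inner ℝ (a - q) (a - q) :=
      (real_inner_self_eq_norm_sq _).symm
    have e2 : inner ℝ (a - q) (a - q)
        = inner ℝ (a - x) (a - y) + inner ℝ (a - x) (y - q)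
          + (inner ℝ (x - q) (a - z) + inner ℝ (x - q) (z - q) : ℝ) := by
      have : (a : H) - q = (a - x) + (x - q) := by abel
      rw [this, inner_add_left]
      have h1 : inner ℝ (a - x) ((a - x) + (x - q)) =
          (inner ℝ (a - x) (a - y) + inner ℝ (a - x) (y - q) : ℝ) := by
        rw [← inner_add_right]; congr 1; abel
      have h2 : inner ℝ (x - q) ((a - x) + (x - q)) =
          (inner ℝ (x - q) (a - z) + inner ℝ (x - q) (z - q) : ℝ) := by
        rw [← inner_add_right]; congr 1; abel
      rw [h1, h2]
    have hvar1' : inner ℝ (a - x) (a - y) ≤ (0 : ℝ) := by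
      have : (a : H) - x = -(x - a) := by abel
      rw [this]
      have : (a : H) - y = -(y - a) := by abel
      rw [this, inner_neg_neg]
      exact hvar1
    have b1 : inner ℝ (a - x) (y - q) ≤ (M + δ) * δ := by
      calc inner ℝ (a - x) (y - q) ≤ ‖a - x‖ * ‖y - q‖ := real_inner_le_norm _ _
        _ ≤ (M + δ) * δ := by
            have h1 : ‖a - x‖ ≤ M + δ := by rwa [norm_sub_rev]
            exact mul_le_mul h1 hqy.le (norm_nonneg _) (by linarith)
    have b2 : inner ℝ (x - q) (a - z) ≤ M * δ := by
      calc inner ℝ (x - q) (a - z) ≤ ‖x - q‖ * ‖a - z‖ := real_inner_le_norm _ _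
        _ ≤ M * δ := by rw [hxq]; exact mul_le_mul_of_nonneg_left haz.le hM0
    rw [e1, e2]; nlinarith
  have hfin : ‖a - q‖ ^ 2 < ε ^ 2 := by
    have h1 : δ * (2 * M + δ) ≤ δ * (2 * M + 1) := by nlinarith
    have h2 : δ ≤ ε ^ 2 / (2 * M + 2) := min_le_right _ _
    have h3 : δ * (2 * M + 1) < ε ^ 2 := by
      have : δ * (2 * M + 1) ≤ ε ^ 2 / (2 * M + 2) * (2 * M + 1) := by nlinarith
      have hlt : ε ^ 2 / (2 * M + 2) * (2 * M + 1) < ε ^ 2 := by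
        rw [div_mul_eq_mul_div, div_lt_iff₀ (by linarith)]
        nlinarith
      linarith
    linarith
  have : ‖a - q‖ < ε := lt_of_pow_lt_pow_left₀ 2 hε.le hfin
  rwa [dist_eq_norm]
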